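/- Let (A, ·, ε, α) be a regular Hom-Novikov color algebra, i.e. α is bijective and α(x·y) = α(x)·α(y). Define [x, y] := x·y − ε(x,y) y·x for homogeneous x, y. Then (A, α^{-1}∘[·,·], ε), with bracket (x, y) ↦ α^{-1}([x,y]), is a Lie color algebra. In particular, if α is an involution (α² = id), then (A, α∘[·,·], ε) is a Lie color algebra. -/

import Mathlib

open scoped TensorProduct

variable {K G A : Type*}

/-- A skew-symmetric bicharacter on the abelian group `G` with values in the field `K`. -/
def IsBicharacter [Field K] [AddCommGroup G] (ε : G → G → K) : Prop :=
  (∀ a b, ε a b ≠ 0) ∧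
  (∀ a b, ε a b * ε b a = 1) ∧
  (∀ a b c, ε a (b + c) = ε a b * ε a c) ∧
  (∀ a b c, ε (a + b) c = ε a c * ε b c)

section Defs

variable [Field K] [AddCommGroup G] [AddCommGroup A] [Module K A]

/-- The bilinear product `mul` respects the grading `𝒜`: `A_a · A_b ⊆ A_{a+b}`. -/
def IsGradedMul (𝒜 : G → Submodule K A) (mul : A →ₗ[K] A →ₗ[K] A) : Prop :=
  ∀ a b : G, ∀ x ∈ 𝒜 a, ∀ y ∈ 𝒜 b, mul x y ∈ 𝒜 (a + b)

/-- An even linear map: `f(A_a) ⊆ A_a`. -/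
def IsEven (𝒜 : G → Submodule K A) (f : A →ₗ[K] A) : Prop :=
  ∀ a : G, ∀ x ∈ 𝒜 a, f x ∈ 𝒜 a

/-- `ε`-commutativity: `x·y = ε(x,y) y·x` for homogeneous `x, y`. -/
def IsEpsCommutative (𝒜 : G → Submodule K A) (ε : G → G → K)
    (mul : A →ₗ[K] A →ₗ[K] A) : Prop :=
  ∀ a b : G, ∀ x ∈ 𝒜 a, ∀ y ∈ 𝒜 b, mul x y = ε a b • mul y x

/-- A Hom-associative color algebra: `α(x)·(y·z) = (x·y)·α(z)` for homogeneous `x, y, z`. -/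
def IsHomAssociative (𝒜 : G → Submodule K A) (mul : A →ₗ[K] A →ₗ[K] A)
    (α : A →ₗ[K] A) : Prop :=
  IsGradedMul 𝒜 mul ∧ IsEven 𝒜 α ∧
  ∀ a b c : G, ∀ x ∈ 𝒜 a, ∀ y ∈ 𝒜 b, ∀ z ∈ 𝒜 c,
    mul (α x) (mul y z) = mul (mul x y) (α z)

/-- A Hom-Novikov color algebra. -/
def IsHomNovikov (𝒜 : G → Submodule K A) (ε : G → G → K)
    (mul : A →ₗ[K] A →ₗ[K] A) (α : A →ₗ[K] A) : Prop :=
  IsGradedMul 𝒜 mul ∧ IsEven 𝒜 α ∧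
  (∀ a b c : G, ∀ x ∈ 𝒜 a, ∀ y ∈ 𝒜 b, ∀ z ∈ 𝒜 c,
    mul (mul x y) (α z) = ε b c • mul (mul x z) (α y)) ∧
  (∀ a b c : G, ∀ x ∈ 𝒜 a, ∀ y ∈ 𝒜 b, ∀ z ∈ 𝒜 c,
    mul (mul x y) (α z) - mul (α x) (mul y z)
      = ε a b • (mul (mul y x) (α z) - mul (α y) (mul x z)))

/-- A Hom-Lie color algebra. -/
def IsHomLie (𝒜 : G → Submodule K A) (ε : G → G → K)
    (br : A →ₗ[K] A →ₗ[K] A) (α : A →ₗ[K] A) : Prop :=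
  IsGradedMul 𝒜 br ∧ IsEven 𝒜 α ∧
  (∀ a b : G, ∀ x ∈ 𝒜 a, ∀ y ∈ 𝒜 b, br x y = -(ε a b • br y x)) ∧
  (∀ a b c : G, ∀ x ∈ 𝒜 a, ∀ y ∈ 𝒜 b, ∀ z ∈ 𝒜 c,
    ε c a • br (α x) (br y z) + ε a b • br (α y) (br z x)
      + ε b c • br (α z) (br x y) = 0)

/-- The `ε`-commutator `[x, y] = x·y − ε(a,b) y·x` of elements `x, y`
of degrees `a, b` respectively. -/
def homBracket (ε : G → G → K) (mul : A →ₗ[K] A →ₗ[K] A)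
    (a b : G) (x y : A) : A :=
  mul x y - ε a b • mul y x

end Defs

section Aux

variable [Field K] [AddCommGroup G] [DecidableEq G] [AddCommGroup A] [Module K A]

set_option synthInstance.maxHeartbeats 800000 in
/-- The component-wise inverse of an even bijective linear map is even. -/
lemma aux_inv_even (𝒜 : G → Submodule K A) [DirectSum.Decomposition 𝒜]
    (α β : A →ₗ[K] A) (hev : ∀ a : G, ∀ x ∈ 𝒜 a, α x ∈ 𝒜 a)
    (hβ₁ : ∀ x, β (α x) = x) (hβ₂ : ∀ x, α (β x) = x) :
    ∀ a : G, ∀ x ∈ 𝒜 a, β x ∈ 𝒜 a := by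
  have hinj : Function.Injective α := by
    intro u v h
    rw [← hβ₁ u, ← hβ₁ v, h]
  have key : ∀ (c : G) (v : A),
      α ((DirectSum.decompose 𝒜 v c : 𝒜 c) : A)
        = ((DirectSum.decompose 𝒜 (α v) c : 𝒜 c) : A) := by
    intro c v
    induction v using DirectSum.Decomposition.inductionOn 𝒜 with
    | zero => simp
    | @homogeneous i m =>
      by_cases hic : i = c
      · subst hic
        rw [DirectSum.decompose_of_mem_same 𝒜 m.2,
          DirectSum.decompose_of_mem_same 𝒜 (hev i m.1 m.2)]
      · rw [DirectSum.decompose_of_mem_ne 𝒜 m.2 hic,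
          DirectSum.decompose_of_mem_ne 𝒜 (hev i m.1 m.2) hic, map_zero]
    | add u v hu hv =>
      simp only [map_add, DirectSum.decompose_add, DirectSum.add_apply,
        Submodule.coe_add, hu, hv]
  intro c x hx
  have h1 : α ((DirectSum.decompose 𝒜 (β x) c : 𝒜 c) : A) = x := by
    rw [key c (β x), hβ₂ x, DirectSum.decompose_of_mem_same 𝒜 hx]
  have h2 : ((DirectSum.decompose 𝒜 (β x) c : 𝒜 c) : A) = β x := by
    apply hinj
    rw [h1, hβ₂]
  rw [← h2]
  exact SetLike.coe_mem _

/-- Antisymmetry of the colored commutator. -/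
lemma aux_antisym (ε : G → G → K) (hε : IsBicharacter ε)
    (mul : A →ₗ[K] A →ₗ[K] A) (a b : G) (x y : A) :
    homBracket ε mul a b x y = -(ε a b • homBracket ε mul b a y x) := by
  have h : ε a b * ε b a = 1 := hε.2.1 a b
  simp only [homBracket, smul_sub, smul_smul, h, one_smul]
  abel

/-- Hom-Jacobi identity for the colored commutator in a Hom-Novikov color algebra. -/
lemma aux_jacobi (𝒜 : G → Submodule K A) (ε : G → G → K) (hε : IsBicharacter ε)
    (mul : A →ₗ[K] A →ₗ[K] A) (α : A →ₗ[K] A)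
    (hN2 : ∀ a b c : G, ∀ x ∈ 𝒜 a, ∀ y ∈ 𝒜 b, ∀ z ∈ 𝒜 c,
      mul (mul x y) (α z) - mul (α x) (mul y z)
        = ε a b • (mul (mul y x) (α z) - mul (α y) (mul x z)))
    (a b c : G) (x : A) (hx : x ∈ 𝒜 a) (y : A) (hy : y ∈ 𝒜 b)
    (z : A) (hz : z ∈ 𝒜 c) :
    ε c a • homBracket ε mul a (b + c) (α x) (homBracket ε mul b c y z)
      + ε a b • homBracket ε mul b (c + a) (α y) (homBracket ε mul c a z x)
      + ε b c • homBracket ε mul c (a + b) (α z) (homBracket ε mul a b x y) = 0 := by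
  obtain ⟨hne, hsym, hadd, -⟩ := hε
  have h1 := hN2 a b c x hx y hy z hz
  have h2 := hN2 b c a y hy z hz x hx
  have h3 := hN2 c a b z hz x hx y hy
  have hac : ε a c = (ε c a)⁻¹ := eq_inv_of_mul_eq_one_left (hsym a c)
  have hba : ε b a = (ε a b)⁻¹ := eq_inv_of_mul_eq_one_left (hsym b a)
  have hcb : ε c b = (ε b c)⁻¹ := eq_inv_of_mul_eq_one_left (hsym c b)
  have hr : ε c a ≠ 0 := hne c a
  have hp : ε a b ≠ 0 := hne a b
  have hq : ε b c ≠ 0 := hne b c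
  have key : ε c a • homBracket ε mul a (b + c) (α x) (homBracket ε mul b c y z)
      + ε a b • homBracket ε mul b (c + a) (α y) (homBracket ε mul c a z x)
      + ε b c • homBracket ε mul c (a + b) (α z) (homBracket ε mul a b x y)
      = (-(ε c a)) • (mul (mul x y) (α z) - mul (α x) (mul y z)
          - ε a b • (mul (mul y x) (α z) - mul (α y) (mul x z)))
        + (-(ε a b)) • (mul (mul y z) (α x) - mul (α y) (mul z x)
          - ε b c • (mul (mul z y) (α x) - mul (α z) (mul y x)))
        + (-(ε b c)) • (mul (mul z x) (α y) - mul (α z) (mul x y)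
          - ε c a • (mul (mul x z) (α y) - mul (α x) (mul z y))) := by
    simp only [homBracket, hadd, hac, hba, hcb, map_sub, map_smul,
      LinearMap.sub_apply, LinearMap.smul_apply, smul_sub, smul_smul]
    match_scalars <;> field_simp <;> ring
  rw [key, sub_eq_zero_of_eq h1, sub_eq_zero_of_eq h2, sub_eq_zero_of_eq h3]
  simp

/-- The main auxiliary lemma: the three Lie-color-algebra axioms for `β ∘ [·,·]`
where `β` is a linear inverse of `α`. -/
lemma aux_main (𝒜 : G → Submodule K A) [DirectSum.Decomposition 𝒜]
    (ε : G → G → K) (hε : IsBicharacter ε)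
    (mul : A →ₗ[K] A →ₗ[K] A) (α : A →ₗ[K] A)
    (hN : IsHomNovikov 𝒜 ε mul α)
    (hmult : ∀ x y : A, α (mul x y) = mul (α x) (α y))
    (β : A →ₗ[K] A) (hβ₁ : ∀ x, β (α x) = x) (hβ₂ : ∀ x, α (β x) = x) :
    (∀ a b : G, ∀ x ∈ 𝒜 a, ∀ y ∈ 𝒜 b,
        β (homBracket ε mul a b x y) ∈ 𝒜 (a + b)) ∧
    (∀ a b : G, ∀ x ∈ 𝒜 a, ∀ y ∈ 𝒜 b,
        β (homBracket ε mul a b x y)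
          = -(ε a b • β (homBracket ε mul b a y x))) ∧
    (∀ a b c : G, ∀ x ∈ 𝒜 a, ∀ y ∈ 𝒜 b, ∀ z ∈ 𝒜 c,
        ε c a • β (homBracket ε mul a (b + c) x (β (homBracket ε mul b c y z)))
        + ε a b • β (homBracket ε mul b (c + a) y (β (homBracket ε mul c a z x)))
        + ε b c • β (homBracket ε mul c (a + b) z (β (homBracket ε mul a b x y)))
          = 0) := by
  obtain ⟨hgr, hev, hN1, hN2⟩ := hN
  have hβe : ∀ a : G, ∀ x ∈ 𝒜 a, β x ∈ 𝒜 a := aux_inv_even 𝒜 α β hev hβ₁ hβ₂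
  have hβmul : ∀ u v : A, β (mul u v) = mul (β u) (β v) := by
    intro u v
    have h := hmult (β u) (β v)
    rw [hβ₂, hβ₂] at h
    rw [← h, hβ₁]
  have hβbr : ∀ (a b : G) (u v : A),
      β (homBracket ε mul a b u v) = homBracket ε mul a b (β u) (β v) := by
    intro a b u v
    simp only [homBracket, map_sub, map_smul, hβmul]
  refine ⟨?_, ?_, ?_⟩
  · intro a b x hx y hy
    apply hβe
    apply Submodule.sub_mem
    · exact hgr a b x hx y hy
    · apply Submodule.smul_mem
      have := hgr b a y hy x hx
      rwa [add_comm] at this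
  · intro a b x hx y hy
    rw [aux_antisym ε hε mul a b x y, map_neg, map_smul]
  · intro a b c x hx y hy z hz
    have hx2 : β (β x) ∈ 𝒜 a := hβe a _ (hβe a x hx)
    have hy2 : β (β y) ∈ 𝒜 b := hβe b _ (hβe b y hy)
    have hz2 : β (β z) ∈ 𝒜 c := hβe c _ (hβe c z hz)
    have J := aux_jacobi 𝒜 ε hε mul α hN2 a b c (β (β x)) hx2 (β (β y)) hy2
      (β (β z)) hz2
    simp only [hβ₂] at J
    simp only [hβbr]
    exact J

end Aux

/-- for a regular Hom-Novikov color algebra, `(A, α⁻¹∘[·,·], ε)` is a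
Lie color algebra; in particular if `α` is an involution, `(A, α∘[·,·], ε)` is a
Lie color algebra. Here `α'` is the (linear) inverse of `α`. -/
theorem statement7 {K G A : Type*} [Field K] [AddCommGroup G] [DecidableEq G]
    [AddCommGroup A] [Module K A]
    (𝒜 : G → Submodule K A) [DirectSum.Decomposition 𝒜]
    (ε : G → G → K) (hε : IsBicharacter ε)
    (mul : A →ₗ[K] A →ₗ[K] A) (α : A →ₗ[K] A)
    (hN : IsHomNovikov 𝒜 ε mul α)
    (hbij : Function.Bijective α)
    (hmult : ∀ x y : A, α (mul x y) = mul (α x) (α y))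
    (α' : A →ₗ[K] A) (hα'₁ : ∀ x, α' (α x) = x) (hα'₂ : ∀ x, α (α' x) = x) :
    ((∀ a b : G, ∀ x ∈ 𝒜 a, ∀ y ∈ 𝒜 b,
        α' (homBracket ε mul a b x y) ∈ 𝒜 (a + b)) ∧
     (∀ a b : G, ∀ x ∈ 𝒜 a, ∀ y ∈ 𝒜 b,
        α' (homBracket ε mul a b x y)
          = -(ε a b • α' (homBracket ε mul b a y x))) ∧
     (∀ a b c : G, ∀ x ∈ 𝒜 a, ∀ y ∈ 𝒜 b, ∀ z ∈ 𝒜 c,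
        ε c a • α' (homBracket ε mul a (b + c) x (α' (homBracket ε mul b c y z)))
        + ε a b • α' (homBracket ε mul b (c + a) y (α' (homBracket ε mul c a z x)))
        + ε b c • α' (homBracket ε mul c (a + b) z (α' (homBracket ε mul a b x y)))
          = 0)) ∧
    ((∀ x : A, α (α x) = x) →
      ((∀ a b : G, ∀ x ∈ 𝒜 a, ∀ y ∈ 𝒜 b,
          α (homBracket ε mul a b x y) ∈ 𝒜 (a + b)) ∧
       (∀ a b : G, ∀ x ∈ 𝒜 a, ∀ y ∈ 𝒜 b,
          α (homBracket ε mul a b x y)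
            = -(ε a b • α (homBracket ε mul b a y x))) ∧
       (∀ a b c : G, ∀ x ∈ 𝒜 a, ∀ y ∈ 𝒜 b, ∀ z ∈ 𝒜 c,
          ε c a • α (homBracket ε mul a (b + c) x (α (homBracket ε mul b c y z)))
          + ε a b • α (homBracket ε mul b (c + a) y (α (homBracket ε mul c a z x)))
          + ε b c • α (homBracket ε mul c (a + b) z (α (homBracket ε mul a b x y)))
            = 0))) := by
  exact ⟨aux_main 𝒜 ε hε mul α hN hmult α' hα'₁ hα'₂,
    fun hinv => aux_main 𝒜 ε hε mul α hN hmult α hinv hinv⟩
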